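/- Let A, B be positive reals and C ≥ 0 with A > B and A ≠ B + C. Then there is a constant K (depending on A, B, C) such that for all x > 0, ∫_0^∞ max(x/a, 1)^{-A} · a^{-B} · max(a, 1)^{-C} (da/a) ≤ K · max(x, 1)^{-min(A-B, C)} · x^{-B}. -/

import Mathlib

open MeasureTheory Real Set

section Aux

lemma aux_intOn_Ioc (t e : ℝ) (he : -1 < e) :
    IntegrableOn (fun a : ℝ => a ^ e) (Ioc 0 t) := by
  rcases le_or_gt t 0 with h | h
  · rw [Ioc_eq_empty (by simpa using h)]; simp [integrableOn_empty]
  · exact (intervalIntegrable_iff_integrableOn_Ioc_of_le h.le).mp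
      (intervalIntegral.intervalIntegrable_rpow' he)

lemma aux_int_Ioc (t e : ℝ) (ht : 0 < t) (he : -1 < e) :
    ∫ a in Ioc 0 t, a ^ e = t ^ (e + 1) / (e + 1) := by
  rw [← intervalIntegral.integral_of_le ht.le, integral_rpow (Or.inl he),
    Real.zero_rpow (by linarith : e + 1 ≠ 0), sub_zero]

lemma aux_intOn_Ioi (c e : ℝ) (hc : 0 < c) (he : e < -1) :
    IntegrableOn (fun a : ℝ => a ^ e) (Ioi c) :=
  integrableOn_Ioi_rpow_of_lt he hc

lemma aux_int_Ioi (c e : ℝ) (hc : 0 < c) (he : e < -1) :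
    ∫ a in Ioi c, a ^ e = -c ^ (e + 1) / (e + 1) :=
  integral_Ioi_rpow_of_lt he hc

lemma f_contOn (x A B C : ℝ) :
    ContinuousOn (fun a : ℝ => max (x / a) 1 ^ (-A) * a ^ (-B) * max a 1 ^ (-C) / a)
      (Ioi 0) := by
  have h1 : ContinuousOn (fun a : ℝ => max (x / a) 1 ^ (-A)) (Ioi 0) := by
    apply ContinuousOn.rpow_const
    · exact (continuousOn_const.div continuousOn_id fun a ha => ne_of_gt ha).sup
        continuousOn_const
    · intro a _; left; exact ne_of_gt (lt_of_lt_of_le one_pos (le_max_right _ _))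
  have h2 : ContinuousOn (fun a : ℝ => a ^ (-B)) (Ioi 0) :=
    continuousOn_id.rpow_const fun a ha => Or.inl (ne_of_gt ha)
  have h3 : ContinuousOn (fun a : ℝ => max a 1 ^ (-C)) (Ioi 0) :=
    (continuousOn_id.sup continuousOn_const).rpow_const fun a _ =>
      Or.inl (ne_of_gt (lt_of_lt_of_le one_pos (le_max_right _ _)))
  exact ((h1.mul h2).mul h3).div continuousOn_id fun a ha => ne_of_gt ha

lemma f_nonneg (x A B C a : ℝ) (ha : 0 < a) :
    0 ≤ max (x / a) 1 ^ (-A) * a ^ (-B) * max a 1 ^ (-C) / a := by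
  have h1 : (0:ℝ) ≤ max (x / a) 1 := le_trans zero_le_one (le_max_right _ _)
  have h3 : (0:ℝ) ≤ max a 1 := le_trans zero_le_one (le_max_right _ _)
  positivity

lemma div_rpow_neg (x a A : ℝ) (hx : 0 < x) (ha : 0 < a) :
    (x / a) ^ (-A) = x ^ (-A) * a ^ A := by
  rw [Real.div_rpow hx.le ha.le, Real.rpow_neg ha.le A]
  field_simp

lemma f_eq_small (x A B C a : ℝ) (hx : 0 < x) (ha : 0 < a) (hax : a ≤ x) (ha1 : a ≤ 1) :
    max (x / a) 1 ^ (-A) * a ^ (-B) * max a 1 ^ (-C) / a = x ^ (-A) * a ^ (A - B - 1) := by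
  have h1 : max (x / a) 1 = x / a := max_eq_left ((one_le_div ha).2 hax)
  have h2 : max a 1 = 1 := max_eq_right ha1
  rw [h1, h2, one_rpow, mul_one, div_rpow_neg x a A hx ha, div_eq_mul_inv,
    ← Real.rpow_neg_one a, mul_assoc, mul_assoc, ← Real.rpow_add ha, ← Real.rpow_add ha]
  ring_nf

lemma f_eq_mid (x A B C a : ℝ) (hx : 0 < x) (ha : 0 < a) (hax : a ≤ x) (ha1 : 1 ≤ a) :
    max (x / a) 1 ^ (-A) * a ^ (-B) * max a 1 ^ (-C) / a
      = x ^ (-A) * a ^ (A - B - C - 1) := by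
  have h1 : max (x / a) 1 = x / a := max_eq_left ((one_le_div ha).2 hax)
  have h2 : max a 1 = a := max_eq_left ha1
  rw [h1, h2, div_rpow_neg x a A hx ha, div_eq_mul_inv, ← Real.rpow_neg_one a,
    mul_assoc, mul_assoc, mul_assoc, ← Real.rpow_add ha, ← Real.rpow_add ha,
    ← Real.rpow_add ha]
  ring_nf

lemma f_le_big (x A B C a : ℝ) (hA : 0 ≤ A) (hx1 : 1 ≤ x) (hax : x < a) :
    max (x / a) 1 ^ (-A) * a ^ (-B) * max a 1 ^ (-C) / a ≤ a ^ (-B - C - 1) := by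
  have ha : 0 < a := lt_of_le_of_lt (by linarith) hax
  have h2 : max a 1 = a := max_eq_left (le_trans hx1 hax.le)
  have h1 : max (x / a) 1 ^ (-A) ≤ 1 :=
    Real.rpow_le_one_of_one_le_of_nonpos (le_max_right _ _) (by linarith)
  have key : a ^ (-B) * a ^ (-C) / a = a ^ (-B - C - 1) := by
    rw [div_eq_mul_inv, ← Real.rpow_neg_one a, ← Real.rpow_add ha, ← Real.rpow_add ha]
    ring_nf
  calc max (x / a) 1 ^ (-A) * a ^ (-B) * max a 1 ^ (-C) / a
      ≤ 1 * a ^ (-B) * max a 1 ^ (-C) / a := by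
        apply div_le_div_of_nonneg_right ?_ ha.le
        apply mul_le_mul_of_nonneg_right (mul_le_mul_of_nonneg_right h1 (Real.rpow_nonneg ha.le _))
        exact Real.rpow_nonneg (le_trans zero_le_one (le_max_right _ _)) _
    _ = a ^ (-B - C - 1) := by rw [one_mul, h2]; exact key

lemma f_le_big' (x A B C a : ℝ) (hA : 0 ≤ A) (hC : 0 ≤ C) (ha : 0 < a) :
    max (x / a) 1 ^ (-A) * a ^ (-B) * max a 1 ^ (-C) / a ≤ a ^ (-B - 1) := by
  have h1 : max (x / a) 1 ^ (-A) ≤ 1 :=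
    Real.rpow_le_one_of_one_le_of_nonpos (le_max_right _ _) (by linarith)
  have h3 : max a 1 ^ (-C) ≤ 1 :=
    Real.rpow_le_one_of_one_le_of_nonpos (le_max_right _ _) (by linarith)
  have key : a ^ (-B) / a = a ^ (-B - 1) := by
    rw [div_eq_mul_inv, ← Real.rpow_neg_one a, ← Real.rpow_add ha]; ring_nf
  calc max (x / a) 1 ^ (-A) * a ^ (-B) * max a 1 ^ (-C) / a
      ≤ 1 * a ^ (-B) * 1 / a := by
        apply div_le_div_of_nonneg_right ?_ ha.le
        have hb := Real.rpow_nonneg ha.le (-B)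
        have h1n : (0:ℝ) ≤ max (x / a) 1 ^ (-A) :=
          Real.rpow_nonneg (le_trans zero_le_one (le_max_right _ _)) _
        have h3n : (0:ℝ) ≤ max a 1 ^ (-C) :=
          Real.rpow_nonneg (le_trans zero_le_one (le_max_right _ _)) _
        nlinarith [mul_le_mul_of_nonneg_right h1 hb]
    _ = a ^ (-B - 1) := by rw [one_mul, mul_one]; exact key

end Aux

/-- For `A, B > 0`, `C ≥ 0` with `A > B` and `A ≠ B + C`, there is a constant `K`
such that for all `x > 0`,
`∫_0^∞ max(x/a,1)^(-A) a^(-B) max(a,1)^(-C) da/a ≤ K max(x,1)^(-min(A-B,C)) x^(-B)`. -/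
theorem stmt_1 (A B C : ℝ) (hA : 0 < A) (hB : 0 < B) (hC : 0 ≤ C)
    (hAB : B < A) (hABC : A ≠ B + C) :
    ∃ K : ℝ, ∀ x : ℝ, 0 < x →
      (∫ a in Ioi (0 : ℝ),
          (max (x / a) 1) ^ (-A) * a ^ (-B) * (max a 1) ^ (-C) / a) ≤
        K * (max x 1) ^ (-(min (A - B) C)) * x ^ (-B) := by
  have hABpos : 0 < A - B := by linarith
  have hBC : 0 < B + C := by linarith
  have hDne : A - B - C ≠ 0 := fun h => hABC (by linarith)
  have habs : 0 < |A - B - C| := abs_pos.mpr hDne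
  refine ⟨1/(A-B) + 1/B + 1/(B+C) + 1/|A-B-C|, fun x hx => ?_⟩
  set K := 1/(A-B) + 1/B + 1/(B+C) + 1/|A-B-C| with hKdef
  set f : ℝ → ℝ := fun a => max (x / a) 1 ^ (-A) * a ^ (-B) * max a 1 ^ (-C) / a with hfdef
  have hmeas : ∀ s : Set ℝ, s ⊆ Ioi 0 → MeasurableSet s → AEStronglyMeasurable f (volume.restrict s) :=
    fun s hs hsm => ((f_contOn x A B C).mono hs).aestronglyMeasurable hsm
  rcases le_or_gt 1 x with hx1 | hx1
  · -- case x ≥ 1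
    set μ := min (A - B) C with hμ
    have hμAB : μ ≤ A - B := min_le_left _ _
    have hμC : μ ≤ C := min_le_right _ _
    have hμ0 : 0 ≤ μ := le_min hABpos.le hC
    -- integrability of f on the three pieces
    have hf1 : IntegrableOn f (Ioc 0 1) := by
      refine IntegrableOn.congr_fun
        ((aux_intOn_Ioc 1 (A - B - 1) (by linarith)).const_mul (x ^ (-A)))
        (fun a ha => ?_) measurableSet_Ioc
      exact (f_eq_small x A B C a hx ha.1 (le_trans ha.2 hx1) ha.2).symm
    have hf2 : IntegrableOn f (Ioc 1 x) := by
      rcases lt_or_gt_of_ne hDne with hneg | hpos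
      · refine IntegrableOn.congr_fun
          (((aux_intOn_Ioi 1 (A - B - C - 1) one_pos (by linarith)).mono_set
            Ioc_subset_Ioi_self).const_mul (x ^ (-A))) (fun a ha => ?_) measurableSet_Ioc
        exact (f_eq_mid x A B C a hx (lt_trans one_pos ha.1) ha.2 ha.1.le).symm
      · refine IntegrableOn.congr_fun
          (((aux_intOn_Ioc x (A - B - C - 1) (by linarith)).mono_set
            (Ioc_subset_Ioc_left zero_le_one)).const_mul (x ^ (-A)))
          (fun a ha => ?_) measurableSet_Ioc
        exact (f_eq_mid x A B C a hx (lt_trans one_pos ha.1) ha.2 ha.1.le).symm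
    have hf3 : IntegrableOn f (Ioi x) := by
      refine Integrable.mono' (aux_intOn_Ioi x (-B - C - 1) hx (by linarith))
        (hmeas _ (Ioi_subset_Ioi hx.le) measurableSet_Ioi) ?_
      refine (ae_restrict_iff' measurableSet_Ioi).2 (ae_of_all _ fun a ha => ?_)
      rw [Real.norm_eq_abs, abs_of_nonneg (f_nonneg x A B C a (lt_trans hx ha))]
      exact f_le_big x A B C a hA.le hx1 ha
    -- split the integral
    have hf23 : IntegrableOn f (Ioi 1) := by
      rw [← Ioc_union_Ioi_eq_Ioi hx1]; exact hf2.union hf3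
    have hsplit : ∫ a in Ioi (0:ℝ), f a
        = (∫ a in Ioc (0:ℝ) 1, f a) + ((∫ a in Ioc (1:ℝ) x, f a) + ∫ a in Ioi x, f a) := by
      rw [← setIntegral_union (Ioc_disjoint_Ioi le_rfl) measurableSet_Ioi hf2 hf3,
        Ioc_union_Ioi_eq_Ioi hx1,
        ← setIntegral_union (Ioc_disjoint_Ioi le_rfl) measurableSet_Ioi hf1 hf23,
        Ioc_union_Ioi_eq_Ioi zero_le_one]
    -- evaluate / bound the three pieces
    have hI1 : ∫ a in Ioc (0:ℝ) 1, f a = x ^ (-A) * (1 / (A - B)) := by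
      rw [setIntegral_congr_fun measurableSet_Ioc
        (fun a ha => f_eq_small x A B C a hx ha.1 (le_trans ha.2 hx1) ha.2),
        integral_const_mul, aux_int_Ioc 1 (A - B - 1) one_pos (by linarith),
        show A - B - 1 + 1 = A - B by ring, Real.one_rpow]
    have hI3 : ∫ a in Ioi x, f a ≤ x ^ (-(B + C)) / (B + C) := by
      calc ∫ a in Ioi x, f a
          ≤ ∫ a in Ioi x, a ^ (-B - C - 1) :=
            setIntegral_mono_on hf3 (aux_intOn_Ioi x (-B - C - 1) hx (by linarith))
              measurableSet_Ioi (fun a ha => f_le_big x A B C a hA.le hx1 ha)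
        _ = x ^ (-(B + C)) / (B + C) := by
            rw [aux_int_Ioi x (-B - C - 1) hx (by linarith),
              show -B - C - 1 + 1 = -(B + C) by ring]
            field_simp [hBC.ne']
    -- combine
    have hmax : max x 1 = x := max_eq_left hx1
    rw [hmax, mul_assoc, ← Real.rpow_add hx]
    set q := -μ + -B with hq
    have hxq : (0:ℝ) < x ^ q := Real.rpow_pos_of_pos hx q
    have hpow : ∀ p : ℝ, p ≤ q → x ^ p ≤ x ^ q := fun p hp =>
      Real.rpow_le_rpow_of_exponent_le hx1 hp
    have hT1 : x ^ (-A) * (1 / (A - B)) ≤ (1 / (A - B)) * x ^ q := by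
      rw [mul_comm]
      exact mul_le_mul_of_nonneg_left (hpow _ (by simp only [hq]; linarith))
        (one_div_pos.mpr hABpos).le
    have hT3 : x ^ (-(B + C)) / (B + C) ≤ (1 / (B + C)) * x ^ q := by
      rw [div_eq_mul_inv, mul_comm, ← one_div]
      exact mul_le_mul_of_nonneg_left (hpow _ (by simp only [hq]; linarith))
        (one_div_pos.mpr hBC).le
    have hT2 : ∫ a in Ioc (1:ℝ) x, f a ≤ (1 / |A - B - C|) * x ^ q := by
      have heq : ∫ a in Ioc (1:ℝ) x, f a
          = x ^ (-A) * ∫ a in Ioc (1:ℝ) x, a ^ (A - B - C - 1) := by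
        rw [setIntegral_congr_fun measurableSet_Ioc
          (fun a ha => f_eq_mid x A B C a hx (lt_trans one_pos ha.1) ha.2 ha.1.le),
          integral_const_mul]
      have hxA : (0:ℝ) ≤ x ^ (-A) := Real.rpow_nonneg hx.le _
      rcases lt_or_gt_of_ne hDne with hneg | hpos
      · -- A - B - C < 0 : μ ≤ A - B
        have habs' : |A - B - C| = B + C - A := by
          rw [abs_of_neg hneg]; ring
        calc ∫ a in Ioc (1:ℝ) x, f a
            ≤ x ^ (-A) * (1 / (B + C - A)) := by
              rw [heq]
              apply mul_le_mul_of_nonneg_left ?_ hxA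
              calc ∫ a in Ioc (1:ℝ) x, a ^ (A - B - C - 1)
                  ≤ ∫ a in Ioi (1:ℝ), a ^ (A - B - C - 1) := by
                    refine setIntegral_mono_set
                      (aux_intOn_Ioi 1 (A - B - C - 1) one_pos (by linarith))
                      ((ae_restrict_iff' measurableSet_Ioi).2 (ae_of_all _ fun a ha =>
                        Real.rpow_nonneg (le_of_lt (lt_trans one_pos ha)) _))
                      (HasSubset.Subset.eventuallyLE Ioc_subset_Ioi_self)
                _ = 1 / (B + C - A) := by
                    rw [aux_int_Ioi 1 (A - B - C - 1) one_pos (by linarith),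
                      show A - B - C - 1 + 1 = A - B - C by ring, Real.one_rpow]
                    rw [div_eq_div_iff (ne_of_lt hneg) (by linarith : B + C - A ≠ 0)]
                    ring
          _ ≤ (1 / |A - B - C|) * x ^ q := by
              rw [habs', mul_comm]
              exact mul_le_mul_of_nonneg_left (hpow _ (by simp only [hq]; linarith))
                (one_div_pos.mpr (by linarith : (0:ℝ) < B + C - A)).le
      · -- A - B - C > 0 : μ ≤ C
        have habs' : |A - B - C| = A - B - C := abs_of_pos hpos
        calc ∫ a in Ioc (1:ℝ) x, f a
            ≤ x ^ (-A) * (x ^ (A - B - C) / (A - B - C)) := by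
              rw [heq]
              apply mul_le_mul_of_nonneg_left ?_ hxA
              calc ∫ a in Ioc (1:ℝ) x, a ^ (A - B - C - 1)
                  ≤ ∫ a in Ioc (0:ℝ) x, a ^ (A - B - C - 1) := by
                    refine setIntegral_mono_set (aux_intOn_Ioc x (A - B - C - 1) (by linarith))
                      ((ae_restrict_iff' measurableSet_Ioc).2 (ae_of_all _ fun a ha =>
                        Real.rpow_nonneg ha.1.le _))
                      (HasSubset.Subset.eventuallyLE (Ioc_subset_Ioc_left zero_le_one))
                _ = x ^ (A - B - C) / (A - B - C) := by
                    rw [aux_int_Ioc x (A - B - C - 1) (lt_of_lt_of_le one_pos hx1) (by linarith),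
                      show A - B - C - 1 + 1 = A - B - C by ring]
          _ = (1 / (A - B - C)) * x ^ (-A + (A - B - C)) := by
              rw [Real.rpow_add hx]; ring
          _ ≤ (1 / |A - B - C|) * x ^ q := by
              rw [habs']
              exact mul_le_mul_of_nonneg_left (hpow _ (by simp only [hq]; linarith))
                (one_div_pos.mpr hpos).le
    have hsum : 1 / (A - B) + 1 / |A - B - C| + 1 / (B + C) ≤ K := by
      rw [hKdef]
      have : 0 < 1 / B := one_div_pos.mpr hB
      linarith
    calc ∫ a in Ioi (0:ℝ), f a
        = (∫ a in Ioc (0:ℝ) 1, f a) + ((∫ a in Ioc (1:ℝ) x, f a) + ∫ a in Ioi x, f a) := hsplit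
      _ ≤ (1 / (A - B)) * x ^ q + ((1 / |A - B - C|) * x ^ q + (1 / (B + C)) * x ^ q) :=
          add_le_add ((le_of_eq hI1).trans hT1) (add_le_add hT2 (hI3.trans hT3))
      _ = (1 / (A - B) + 1 / |A - B - C| + 1 / (B + C)) * x ^ q := by ring
      _ ≤ K * x ^ q := mul_le_mul_of_nonneg_right hsum hxq.le
  · -- case x < 1
    have hf1 : IntegrableOn f (Ioc 0 x) := by
      refine IntegrableOn.congr_fun
        ((aux_intOn_Ioc x (A - B - 1) (by linarith)).const_mul (x ^ (-A)))
        (fun a ha => ?_) measurableSet_Ioc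
      exact (f_eq_small x A B C a hx ha.1 ha.2 (le_trans ha.2 hx1.le)).symm
    have hf3 : IntegrableOn f (Ioi x) := by
      refine Integrable.mono' (aux_intOn_Ioi x (-B - 1) hx (by linarith))
        (hmeas _ (Ioi_subset_Ioi hx.le) measurableSet_Ioi) ?_
      refine (ae_restrict_iff' measurableSet_Ioi).2 (ae_of_all _ fun a ha => ?_)
      rw [Real.norm_eq_abs, abs_of_nonneg (f_nonneg x A B C a (lt_trans hx ha))]
      exact f_le_big' x A B C a hA.le hC (lt_trans hx ha)
    have hsplit : ∫ a in Ioi (0:ℝ), f a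
        = (∫ a in Ioc (0:ℝ) x, f a) + ∫ a in Ioi x, f a := by
      rw [← setIntegral_union (Ioc_disjoint_Ioi le_rfl) measurableSet_Ioi hf1 hf3,
        Ioc_union_Ioi_eq_Ioi hx.le]
    have hI1 : ∫ a in Ioc (0:ℝ) x, f a = (1 / (A - B)) * x ^ (-B) := by
      rw [setIntegral_congr_fun measurableSet_Ioc
        (fun a ha => f_eq_small x A B C a hx ha.1 ha.2 (le_trans ha.2 hx1.le)),
        integral_const_mul, aux_int_Ioc x (A - B - 1) hx (by linarith),
        show A - B - 1 + 1 = A - B by ring, div_eq_mul_inv, ← mul_assoc,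
        ← Real.rpow_add hx, show -A + (A - B) = -B by ring, ← one_div]
      ring
    have hI3 : ∫ a in Ioi x, f a ≤ (1 / B) * x ^ (-B) := by
      calc ∫ a in Ioi x, f a
          ≤ ∫ a in Ioi x, a ^ (-B - 1) :=
            setIntegral_mono_on hf3 (aux_intOn_Ioi x (-B - 1) hx (by linarith))
              measurableSet_Ioi
              (fun a ha => f_le_big' x A B C a hA.le hC (lt_trans hx ha))
        _ = (1 / B) * x ^ (-B) := by
            rw [aux_int_Ioi x (-B - 1) hx (by linarith), show -B - 1 + 1 = -B by ring]
            field_simp [hB.ne']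
    have hmax : max x 1 = 1 := max_eq_right hx1.le
    rw [hmax, Real.one_rpow, mul_one]
    have hxB : (0:ℝ) < x ^ (-B) := Real.rpow_pos_of_pos hx _
    have hsum : 1 / (A - B) + 1 / B ≤ K := by
      rw [hKdef]
      have h1 : 0 < 1 / (B + C) := one_div_pos.mpr hBC
      have h2 : 0 < 1 / |A - B - C| := one_div_pos.mpr habs
      linarith
    calc ∫ a in Ioi (0:ℝ), f a
        = (∫ a in Ioc (0:ℝ) x, f a) + ∫ a in Ioi x, f a := hsplit
      _ ≤ (1 / (A - B)) * x ^ (-B) + (1 / B) * x ^ (-B) :=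
          add_le_add (le_of_eq hI1) hI3
      _ = (1 / (A - B) + 1 / B) * x ^ (-B) := by ring
      _ ≤ K * x ^ (-B) := mul_le_mul_of_nonneg_right hsum hxB.le
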